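/- Let p : F → E be a connected covering of directed graphs, v ∈ F⁰, T a spanning tree for E, and c := c_{p(v),T} : E¹ → π₁(E, p(v)) the labelling c(e) = a_{s(e)} e a_{r(e)}⁻¹ determined by T and base point p(v). Then F is isomorphic, as a directed graph, to the relative skew product E ×_c (π₁(E, p(v)) / p∗π₁(F, v)). -/

import Mathlib

/-- A directed graph `E = (E⁰, E¹, r, s)`. -/
structure Digraph' : Type 1 where
  V : Type
  E : Type
  r : E → V
  s : E → V

namespace Digraph'

/-- A step in a walk: an edge traversed forwards (`true`) or backwards (`false`). -/
abbrev Step (X : Digraph') : Type := X.E × Bool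

def stepSrc (X : Digraph') (p : X.Step) : X.V := if p.2 then X.s p.1 else X.r p.1

def stepTgt (X : Digraph') (p : X.Step) : X.V := if p.2 then X.r p.1 else X.s p.1

/-- `X.IsWalk u v l`: `l` is a walk from `u` to `v`. -/
def IsWalk (X : Digraph') : X.V → X.V → List X.Step → Prop
  | u, v, [] => u = v
  | u, v, p :: l => X.stepSrc p = u ∧ X.IsWalk (X.stepTgt p) v l

/-- A walk is reduced if it contains no subwalk `e e⁻¹` or `e⁻¹ e`. -/
def Reduced (X : Digraph') (l : List X.Step) : Prop :=
  List.Chain' (fun p q => ¬(p.1 = q.1 ∧ p.2 = !q.2)) l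

/-- The reverse of a walk, traversing it backwards and inverting each edge. -/
def winv (X : Digraph') (l : List X.Step) : List X.Step :=
  (l.map fun p => (p.1, !p.2)).reverse

open Classical in
/-- The reduction of a walk: repeatedly delete adjacent pairs `e e⁻¹`, `e⁻¹ e`. -/
noncomputable def red (X : Digraph') : List X.Step → List X.Step
  | [] => []
  | p :: l =>
    match X.red l with
    | [] => [p]
    | q :: m => if p.1 = q.1 ∧ p.2 = !q.2 then m else p :: q :: m

/-- The reduced loops in `X` based at `u`; the carrier of `π₁(X, u)`. -/
abbrev Loop (X : Digraph') (u : X.V) : Type :=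
  {l : List X.Step // X.IsWalk u u l ∧ X.Reduced l}

/-- `X` is connected: there is a walk between any two vertices. -/
def Connected (X : Digraph') : Prop := ∀ u v : X.V, ∃ l, X.IsWalk u v l

end Digraph'

/-- A morphism of directed graphs. -/
structure Digraph'.Hom (F E : Digraph') where
  vmap : F.V → E.V
  emap : F.E → E.E
  hr : ∀ e, E.r (emap e) = vmap (F.r e)
  hs : ∀ e, E.s (emap e) = vmap (F.s e)

/-- The action of a graph morphism on walks. -/
def Digraph'.Hom.wmap {F E : Digraph'} (p : Digraph'.Hom F E) (l : List F.Step) :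
    List E.Step :=
  l.map fun q => (p.emap q.1, q.2)

/-- A covering of directed graphs: a surjective morphism restricting to bijections
on incoming and outgoing edge sets at each vertex. -/
structure Digraph'.IsCovering {F E : Digraph'} (p : Digraph'.Hom F E) : Prop where
  vsurj : Function.Surjective p.vmap
  esurj : Function.Surjective p.emap
  rbij : ∀ v : F.V, Set.BijOn p.emap {e | F.r e = v} {e | E.r e = p.vmap v}
  sbij : ∀ v : F.V, Set.BijOn p.emap {e | F.s e = v} {e | E.s e = p.vmap v}

namespace Digraph'

/-- The relative skew product `E ×_c (G/H)` of a graph `E` by a labelling `c : E¹ → G`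
relative to a subgroup `H ≤ G`: vertices `E⁰ × (G/H)`, edges `E¹ × (G/H)`,
`r(e, gH) = (r(e), gH)`, `s(e, gH) = (s(e), c(e)gH)`. -/
def skew (X : Digraph') {G : Type} [Group G] (c : X.E → G) (H : Subgroup G) : Digraph' where
  V := X.V × (G ⧸ H)
  E := X.E × (G ⧸ H)
  r := fun p => (X.r p.1, p.2)
  s := fun p => (X.s p.1, c p.1 • p.2)

/-- The coordinate projection `(x, gH) ↦ x` from `E ×_c (G/H)` to `E`. -/
def skewProj (X : Digraph') {G : Type} [Group G] (c : X.E → G) (H : Subgroup G) :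
    Digraph'.Hom (X.skew c H) X where
  vmap := Prod.fst
  emap := Prod.fst
  hr := fun _ => rfl
  hs := fun _ => rfl

end Digraph'

namespace Digraph'

/-- A walk lies in a set `T` of edges. -/
def InTree (X : Digraph') (T : Set X.E) (l : List X.Step) : Prop :=
  ∀ q ∈ l, q.1 ∈ T

/-- `T` is a spanning tree of `X`: between any two vertices there is exactly one
reduced walk lying in `T`. -/
def IsSpanningTree (X : Digraph') (T : Set X.E) : Prop :=
  ∀ u w : X.V, ∃! l : List X.Step, X.IsWalk u w l ∧ X.Reduced l ∧ X.InTree T l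

end Digraph'

open Digraph'

namespace Digraph'
variable {X : Digraph'}

open Classical in
lemma red_cons (p : X.Step) (l : List X.Step) :
    X.red (p :: l) = match X.red l with
      | [] => [p]
      | q :: m => if p.1 = q.1 ∧ p.2 = !q.2 then m else p :: q :: m := by
  rw [red]

lemma red_cons_nil {p : X.Step} {l : List X.Step} (h : X.red l = []) :
    X.red (p :: l) = [p] := by rw [red_cons, h]

lemma red_cons_cancel {p q : X.Step} {l m : List X.Step} (h : X.red l = q :: m)
    (hc : p.1 = q.1 ∧ p.2 = !q.2) : X.red (p :: l) = m := by
  rw [red_cons, h]; simp [hc]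

lemma red_cons_noncancel {p q : X.Step} {l m : List X.Step} (h : X.red l = q :: m)
    (hc : ¬(p.1 = q.1 ∧ p.2 = !q.2)) : X.red (p :: l) = p :: q :: m := by
  rw [red_cons, h]; simp [hc]

lemma red_congr {l l' : List X.Step} (h : X.red l = X.red l') (p : X.Step) :
    X.red (p :: l) = X.red (p :: l') := by rw [red_cons, red_cons, h]

lemma reduced_nil : X.Reduced [] := List.isChain_nil

lemma Reduced.tail {p : X.Step} {l : List X.Step} (h : X.Reduced (p :: l)) : X.Reduced l :=
  (List.isChain_cons.mp h).2

lemma red_reduced (l : List X.Step) : X.Reduced (X.red l) := by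
  induction l with
  | nil => exact reduced_nil
  | cons p l ih =>
    rcases h : X.red l with _ | ⟨q, m⟩
    · rw [red_cons_nil h]; exact List.isChain_singleton _
    · by_cases hc : p.1 = q.1 ∧ p.2 = !q.2
      · rw [red_cons_cancel h hc]; rw [h] at ih; exact ih.tail
      · rw [red_cons_noncancel h hc]; rw [h] at ih
        exact List.isChain_cons_cons.mpr ⟨hc, ih⟩

lemma red_of_reduced {l : List X.Step} (h : X.Reduced l) : X.red l = l := by
  induction l with
  | nil => rfl
  | cons p l ih =>
    have hl := ih h.tail
    cases l with
    | nil => exact red_cons_nil rfl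
    | cons q m => exact red_cons_noncancel hl (List.isChain_cons_cons.mp h).1

lemma red_red (l : List X.Step) : X.red (X.red l) = X.red l :=
  red_of_reduced (red_reduced l)

lemma red_append_congr_right {y y' : List X.Step} (h : X.red y = X.red y')
    (x : List X.Step) : X.red (x ++ y) = X.red (x ++ y') := by
  induction x with
  | nil => simpa using h
  | cons p x ih => exact red_congr ih p

lemma red_append_red_right (x y : List X.Step) :
    X.red (x ++ X.red y) = X.red (x ++ y) :=
  red_append_congr_right (red_red y) x

lemma red_cons_cons (p : X.Step) (l : List X.Step) :
    X.red (p :: (p.1, !p.2) :: l) = X.red l := by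
  have hcp : p.1 = (p.1, !p.2).1 ∧ p.2 = !(p.1, !p.2).2 := ⟨rfl, by simp⟩
  rcases h : X.red l with _ | ⟨q, m⟩
  · have h1 : X.red ((p.1, !p.2) :: l) = [(p.1, !p.2)] := red_cons_nil h
    exact red_cons_cancel (p := p) h1 hcp
  · by_cases hc : (p.1, !p.2).1 = q.1 ∧ (p.1, !p.2).2 = !q.2
    · have hq : q = p := by
        obtain ⟨h1, h2⟩ := hc
        refine Prod.ext h1.symm ?_
        simp only at h2
        cases hb : p.2 <;> cases hb2 : q.2 <;> simp_all
      have h1 : X.red ((p.1, !p.2) :: l) = m := red_cons_cancel h hc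
      cases m with
      | nil =>
        have := red_cons_nil (p := p) h1
        rw [this, hq]
      | cons r t =>
        have hred : X.Reduced (q :: r :: t) := h ▸ red_reduced l
        have hnc : ¬(q.1 = r.1 ∧ q.2 = !r.2) := (List.isChain_cons_cons.mp hred).1
        rw [hq] at hnc
        have := red_cons_noncancel (p := p) h1 hnc
        rw [this, hq]
    · have h1 : X.red ((p.1, !p.2) :: l) = (p.1, !p.2) :: q :: m :=
        red_cons_noncancel h hc
      exact red_cons_cancel (p := p) h1 hcp

lemma red_append_red_left (x y : List X.Step) :
    X.red (X.red x ++ y) = X.red (x ++ y) := by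
  induction x with
  | nil => rfl
  | cons p x ih =>
    show X.red (X.red (p :: x) ++ y) = X.red (p :: (x ++ y))
    rcases h : X.red x with _ | ⟨q, m⟩
    · rw [red_cons_nil h]
      rw [h] at ih
      exact (red_congr ih.symm p).symm
    · by_cases hc : p.1 = q.1 ∧ p.2 = !q.2
      · rw [red_cons_cancel h hc]
        have hq : (q : X.Step) = (p.1, !p.2) := by
          obtain ⟨h1, h2'⟩ := hc
          exact Prod.ext h1.symm (by simp [h2'])
        have h2 : X.red (p :: (x ++ y)) = X.red (p :: (q :: (m ++ y))) :=
          red_congr (by rw [← ih, h]; rfl) p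
        rw [h2, hq, red_cons_cons]
      · rw [red_cons_noncancel h hc]
        show X.red (p :: (q :: (m ++ y))) = _
        refine red_congr ?_ p
        rw [← ih, h]; rfl

end Digraph'
namespace Digraph'
variable {X : Digraph'}

lemma winv_nil : X.winv [] = [] := rfl

lemma winv_cons (p : X.Step) (l : List X.Step) :
    X.winv (p :: l) = X.winv l ++ [(p.1, !p.2)] := by simp [winv]

lemma winv_append (x y : List X.Step) :
    X.winv (x ++ y) = X.winv y ++ X.winv x := by simp [winv]

lemma winv_winv (l : List X.Step) : X.winv (X.winv l) = l := by
  simp only [winv, List.map_reverse, List.reverse_reverse, List.map_map]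
  have : ((fun p => (p.1, !p.2)) ∘ fun (p : X.Step) => (p.1, !p.2)) = id := by
    funext p; simp
  rw [this, List.map_id]

lemma stepSrc_inv (p : X.Step) : X.stepSrc (p.1, !p.2) = X.stepTgt p := by
  cases hb : p.2 <;> simp [stepSrc, stepTgt, hb]

lemma stepTgt_inv (p : X.Step) : X.stepTgt (p.1, !p.2) = X.stepSrc p := by
  cases hb : p.2 <;> simp [stepSrc, stepTgt, hb]

lemma IsWalk.append {u w z : X.V} {x y : List X.Step} (h : X.IsWalk u w x)
    (h' : X.IsWalk w z y) : X.IsWalk u z (x ++ y) := by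
  induction x generalizing u with
  | nil => exact (h : u = w) ▸ h'
  | cons p x ih => exact ⟨h.1, ih h.2⟩

lemma IsWalk.winv {u w : X.V} {l : List X.Step} (h : X.IsWalk u w l) :
    X.IsWalk w u (X.winv l) := by
  induction l generalizing u with
  | nil => exact (h : u = w).symm
  | cons p l ih =>
    rw [winv_cons]
    exact (ih h.2).append ⟨stepSrc_inv p, (stepTgt_inv p).trans h.1⟩

lemma IsWalk.end_unique {u w w' : X.V} {l : List X.Step} (h : X.IsWalk u w l)
    (h' : X.IsWalk u w' l) : w = w' := by
  induction l generalizing u with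
  | nil => exact (h : u = w).symm.trans h'
  | cons p l ih => exact ih h.2 h'.2

lemma IsWalk.red {u w : X.V} {l : List X.Step} (h : X.IsWalk u w l) :
    X.IsWalk u w (X.red l) := by
  induction l generalizing u with
  | nil => exact h
  | cons p l ih =>
    obtain ⟨hs, hw⟩ := h
    have ihw := ih hw
    rcases hred : X.red l with _ | ⟨q, m⟩
    · rw [red_cons_nil hred]
      rw [hred] at ihw
      exact ⟨hs, ihw⟩
    · rw [hred] at ihw
      by_cases hc : p.1 = q.1 ∧ p.2 = !q.2
      · rw [red_cons_cancel hred hc]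
        have hq : q = (p.1, !p.2) := Prod.ext hc.1.symm (by simp [hc.2])
        have h2 := ihw.2
        rw [hq, stepTgt_inv, hs] at h2
        exact h2
      · rw [red_cons_noncancel hred hc]
        exact ⟨hs, ihw⟩

lemma Reduced.winv {l : List X.Step} (h : X.Reduced l) : X.Reduced (X.winv l) := by
  rw [Reduced, Digraph'.winv]; unfold List.Chain'; rw [List.isChain_reverse, List.isChain_map]
  refine List.IsChain.imp ?_ h
  rintro a b hn ⟨x, y⟩
  refine hn ⟨x.symm, ?_⟩
  revert y; simp only [flip]
  cases ha : a.2 <;> cases hb : b.2 <;> simp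

lemma red_append_winv (l : List X.Step) : X.red (l ++ X.winv l) = [] := by
  induction l with
  | nil => rfl
  | cons p l ih =>
    show X.red (p :: (l ++ X.winv (p :: l))) = []
    rw [winv_cons, ← List.append_assoc]
    have hz : X.red ((l ++ X.winv l) ++ [(p.1, !p.2)]) = [(p.1, !p.2)] := by
      rw [← red_append_red_left, ih]; rfl
    exact red_cons_cancel hz ⟨rfl, by simp⟩

lemma red_winv (l : List X.Step) : X.red (X.winv l) = X.winv (X.red l) := by
  induction l with
  | nil => rfl
  | cons p l ih =>
    rw [winv_cons]
    have h1 : X.red (X.winv l ++ [(p.1, !p.2)]) =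
        X.red (X.winv (X.red l) ++ [(p.1, !p.2)]) := by
      rw [← red_append_red_left, ih]
    rw [h1]
    rcases hred : X.red l with _ | ⟨q, m⟩
    · rw [red_cons_nil hred]; rfl
    · by_cases hc : p.1 = q.1 ∧ p.2 = !q.2
      · rw [red_cons_cancel hred hc, winv_cons]
        have hq : q = (p.1, !p.2) := Prod.ext hc.1.symm (by simp [hc.2])
        have hqq : (q.1, !q.2) = p := by rw [hq]; exact Prod.ext rfl (by simp)
        rw [hqq]
        have hmr : X.Reduced m := (hred ▸ red_reduced l : X.Reduced (q :: m)).tail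
        have : X.red (X.winv m ++ [p] ++ [(p.1, !p.2)]) =
            X.red (X.winv m ++ ([p] ++ [(p.1, !p.2)])) := by rw [List.append_assoc]
        rw [this]
        have h2 : X.red ([p] ++ [(p.1, !p.2)] : List X.Step) = [] := by
          have := red_cons_cons (X := X) p []
          simpa using this.trans (show X.red ([] : List X.Step) = [] from rfl)
        rw [← red_append_red_right, h2, List.append_nil]
        exact red_of_reduced hmr.winv
      · have hr1 : X.Reduced (X.winv (q :: m)) := Reduced.winv (hred ▸ red_reduced l)
        have hRed : X.Reduced (X.winv (q :: m) ++ [(p.1, !p.2)]) := by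
          rw [Reduced]; unfold List.Chain'; rw [List.isChain_append]
          refine ⟨hr1, List.isChain_singleton _, ?_⟩
          intro x hx y hy
          rw [winv_cons] at hx
          have hx' : x = (q.1, !q.2) := by
            have : (X.winv m ++ [(q.1, !q.2)]).getLast? = some (q.1, !q.2) :=
              List.getLast?_concat
            rw [this, Option.mem_def, Option.some.injEq] at hx
            exact hx.symm
          have hy' : y = (p.1, !p.2) := by
            simp only [List.head?, Option.mem_def, Option.some.injEq] at hy
            exact hy.symm
          subst hx' hy'
          rintro ⟨x1, y1⟩
          refine hc ⟨x1.symm, ?_⟩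
          revert y1
          cases hp : p.2 <;> cases hq : q.2 <;> simp
        rw [red_cons_noncancel hred hc, winv_cons (p := p) (l := q :: m)]
        exact red_of_reduced hRed

end Digraph'
namespace Digraph'
variable {F E : Digraph'} {p : Digraph'.Hom F E}

lemma wmap_nil : p.wmap [] = [] := rfl

lemma wmap_cons (q : F.Step) (l : List F.Step) :
    p.wmap (q :: l) = (p.emap q.1, q.2) :: p.wmap l := rfl

lemma wmap_append (x y : List F.Step) :
    p.wmap (x ++ y) = p.wmap x ++ p.wmap y := List.map_append

lemma wmap_winv (l : List F.Step) : p.wmap (F.winv l) = E.winv (p.wmap l) := by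
  simp [Hom.wmap, winv, List.map_reverse, List.map_map, Function.comp_def]

lemma stepSrc_wmap (q : F.Step) :
    E.stepSrc (p.emap q.1, q.2) = p.vmap (F.stepSrc q) := by
  cases hb : q.2 <;> simp [stepSrc, hb, p.hr, p.hs]

lemma stepTgt_wmap (q : F.Step) :
    E.stepTgt (p.emap q.1, q.2) = p.vmap (F.stepTgt q) := by
  cases hb : q.2 <;> simp [stepTgt, hb, p.hr, p.hs]

lemma IsWalk.wmap {u w : F.V} {l : List F.Step} (h : F.IsWalk u w l) :
    E.IsWalk (p.vmap u) (p.vmap w) (p.wmap l) := by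
  induction l generalizing u with
  | nil => exact congrArg p.vmap (h : u = w)
  | cons q l ih =>
    refine ⟨?_, ?_⟩
    · rw [stepSrc_wmap, h.1]
    · rw [stepTgt_wmap]; exact ih h.2

lemma red_wmap (l : List F.Step) :
    E.red (p.wmap (F.red l)) = E.red (p.wmap l) := by
  induction l with
  | nil => rfl
  | cons q l ih =>
    rcases h : F.red l with _ | ⟨r, m⟩
    · rw [red_cons_nil h]
      rw [h] at ih
      have hnil : E.red (p.wmap l) = [] := ih.symm
      rw [wmap_cons, wmap_cons, red_cons_nil hnil]
      rfl
    · rw [h] at ih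
      by_cases hc : q.1 = r.1 ∧ q.2 = !r.2
      · rw [red_cons_cancel h hc]
        have hgr : ((p.emap q.1, q.2).1, !(p.emap q.1, q.2).2) = (p.emap r.1, r.2) := by
          show (p.emap q.1, !q.2) = (p.emap r.1, r.2)
          rw [hc.1, hc.2, Bool.not_not]
        calc E.red (p.wmap m)
            = E.red ((p.emap q.1, q.2) :: ((p.emap q.1, q.2).1, !(p.emap q.1, q.2).2)
                :: p.wmap m) := (red_cons_cons _ _).symm
          _ = E.red ((p.emap q.1, q.2) :: p.wmap (r :: m)) := by rw [hgr, wmap_cons]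
          _ = E.red ((p.emap q.1, q.2) :: p.wmap l) := red_congr ih _
          _ = E.red (p.wmap (q :: l)) := rfl
      · rw [red_cons_noncancel h hc]
        exact red_congr ih _

lemma reduced_wmap (hp : Digraph'.IsCovering p) {u w : F.V} {l : List F.Step}
    (h : F.IsWalk u w l) (hr : F.Reduced l) : E.Reduced (p.wmap l) := by
  induction l generalizing u with
  | nil => exact reduced_nil
  | cons q l ih =>
    cases l with
    | nil => exact List.isChain_singleton _
    | cons q' t =>
      have htail : E.Reduced (p.wmap (q' :: t)) := ih h.2 hr.tail
      refine List.isChain_cons_cons.mpr ⟨?_, htail⟩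
      rintro ⟨h1, h2⟩
      have hadj : F.stepSrc q' = F.stepTgt q := h.2.1
      have h2' : q.2 = !q'.2 := h2
      have hq : q.1 = q'.1 := by
        cases hb : q.2
        · have hb' : q'.2 = true := by
            rw [hb] at h2'; simpa using h2'.symm
          have e1 : F.s q'.1 = F.s q.1 := by
            simpa [stepSrc, stepTgt, hb, hb'] using hadj
          exact ((hp.sbij (F.s q.1)).injOn rfl e1 h1)
        · have hb' : q'.2 = false := by
            rw [hb] at h2'; simpa using h2'.symm
          have e1 : F.r q'.1 = F.r q.1 := by
            simpa [stepSrc, stepTgt, hb, hb'] using hadj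
          exact ((hp.rbij (F.r q.1)).injOn rfl e1 h1)
      exact (List.isChain_cons_cons.mp hr).1 ⟨hq, h2'⟩

lemma wmap_inj_walk (hp : Digraph'.IsCovering p) {x w w' : F.V} {m m' : List F.Step}
    (hm : F.IsWalk x w m) (hm' : F.IsWalk x w' m')
    (h : p.wmap m = p.wmap m') : m = m' := by
  induction m generalizing x m' with
  | nil => cases m' with
    | nil => rfl
    | cons q' t' => simp [Hom.wmap] at h
  | cons q t ih =>
    cases m' with
    | nil => simp [Hom.wmap] at h
    | cons q' t' =>
      simp only [Hom.wmap, List.map_cons, List.cons.injEq, Prod.mk.injEq] at h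
      have h1 : p.emap q.1 = p.emap q'.1 := h.1.1
      have h2 : q.2 = q'.2 := h.1.2
      have hq : q = q' := by
        refine Prod.ext ?_ h2
        cases hb : q.2
        · have e1 : F.r q.1 = x := by simpa [stepSrc, hb] using hm.1
          have e2 : F.r q'.1 = x := by
            simpa [stepSrc, hb, ← h2] using hm'.1
          exact (hp.rbij x).injOn e1 e2 h1
        · have e1 : F.s q.1 = x := by simpa [stepSrc, hb] using hm.1
          have e2 : F.s q'.1 = x := by
            simpa [stepSrc, hb, ← h2] using hm'.1
          exact (hp.sbij x).injOn e1 e2 h1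
      subst hq
      rw [ih hm.2 hm'.2 (by exact h.2)]

lemma lift_walk (hp : Digraph'.IsCovering p) (s : List E.Step) (w0 : F.V) (y : E.V)
    (h : E.IsWalk (p.vmap w0) y s) :
    ∃ (m : List F.Step) (w : F.V),
      F.IsWalk w0 w m ∧ p.wmap m = s ∧ p.vmap w = y := by
  induction s generalizing w0 with
  | nil => exact ⟨[], w0, rfl, rfl, h⟩
  | cons q s ih =>
    obtain ⟨hsrc, hrest⟩ := h
    cases hb : q.2
    · have hq1 : E.r q.1 = p.vmap w0 := by simpa [stepSrc, hb] using hsrc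
      obtain ⟨e, he, hee⟩ := (hp.rbij w0).surjOn hq1
      have htgt : E.stepTgt q = p.vmap (F.s e) := by
        simp [stepTgt, hb, ← hee, p.hs]
      rw [htgt] at hrest
      obtain ⟨m, w, hw, hwm, hwy⟩ := ih (F.s e) hrest
      refine ⟨(e, false) :: m, w, ⟨?_, ?_⟩, ?_, hwy⟩
      · simpa [stepSrc] using he
      · simpa [stepTgt] using hw
      · rw [wmap_cons, hwm, hee]
        have : q = (q.1, false) := Prod.ext rfl hb
        rw [← this]
    · have hq1 : E.s q.1 = p.vmap w0 := by simpa [stepSrc, hb] using hsrc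
      obtain ⟨e, he, hee⟩ := (hp.sbij w0).surjOn hq1
      have htgt : E.stepTgt q = p.vmap (F.r e) := by
        simp [stepTgt, hb, ← hee, p.hr]
      rw [htgt] at hrest
      obtain ⟨m, w, hw, hwm, hwy⟩ := ih (F.r e) hrest
      refine ⟨(e, true) :: m, w, ⟨?_, ?_⟩, ?_, hwy⟩
      · simpa [stepSrc] using he
      · simpa [stepTgt] using hw
      · rw [wmap_cons, hwm, hee]
        have : q = (q.1, true) := Prod.ext rfl hb
        rw [← this]

end Digraph'
namespace Digraph'

section GroupVal
variable {X : Digraph'} {u : X.V}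

lemma loop_one_val [Group (X.Loop u)]
    (hG : ∀ a b : X.Loop u, (a * b).val = X.red (a.val ++ b.val)) :
    (1 : X.Loop u).val = [] := by
  have hee : (⟨[], rfl, reduced_nil⟩ : X.Loop u) * ⟨[], rfl, reduced_nil⟩ =
      ⟨[], rfl, reduced_nil⟩ := Subtype.ext (by rw [hG]; rfl)
  have h1 : (⟨[], rfl, reduced_nil⟩ : X.Loop u) = 1 :=
    mul_right_cancel (b := (⟨[], rfl, reduced_nil⟩ : X.Loop u))
      (hee.trans (one_mul _).symm)
  rw [← h1]

lemma loop_inv_val [Group (X.Loop u)]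
    (hG : ∀ a b : X.Loop u, (a * b).val = X.red (a.val ++ b.val))
    (γ : X.Loop u) : (γ⁻¹).val = X.winv γ.val := by
  have hmul : γ * ⟨X.winv γ.val, γ.2.1.winv, γ.2.2.winv⟩ = 1 := by
    apply Subtype.ext
    rw [hG, loop_one_val hG]
    exact red_append_winv _
  rw [← eq_inv_of_mul_eq_one_right hmul]

end GroupVal

section RedExtra
variable {X : Digraph'}

lemma red_winv_append (l : List X.Step) : X.red (X.winv l ++ l) = [] := by
  have := red_append_winv (X.winv l)
  rwa [winv_winv] at this

lemma red_winv_append_left (l y : List X.Step) :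
    X.red (X.winv l ++ (l ++ y)) = X.red y := by
  rw [← List.append_assoc, ← red_append_red_left, red_winv_append, List.nil_append]

lemma red_append_winv_self (x y : List X.Step) :
    X.red (x ++ (X.winv y ++ y)) = X.red x := by
  rw [red_append_congr_right (y' := ([] : List X.Step)) (by rw [red_winv_append]; rfl) x,
    List.append_nil]

end RedExtra

section Gloop
variable {F E : Digraph'} {p : Digraph'.Hom F E} {v : F.V} {a : E.V → List E.Step}

noncomputable def gloop (p : Digraph'.Hom F E) (v : F.V) (a : E.V → List E.Step)
    (ha1 : ∀ w, E.IsWalk (p.vmap v) w (a w)) {w : F.V} {l : List F.Step}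
    (hl : F.IsWalk v w l) : E.Loop (p.vmap v) :=
  ⟨E.red (p.wmap l ++ E.winv (a (p.vmap w))),
    ((IsWalk.wmap (p := p) hl).append (ha1 (p.vmap w)).winv).red, red_reduced _⟩

lemma gloop_val (ha1 : ∀ w, E.IsWalk (p.vmap v) w (a w)) {w : F.V} {l : List F.Step}
    (hl : F.IsWalk v w l) :
    (gloop p v a ha1 hl).val = E.red (p.wmap l ++ E.winv (a (p.vmap w))) := rfl

variable [GE : Group (E.Loop (p.vmap v))]

lemma gloop_mul_inv
    (hGE : ∀ x y : E.Loop (p.vmap v), (x * y).val = E.red (x.val ++ y.val))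
    (ha1 : ∀ w, E.IsWalk (p.vmap v) w (a w)) {w w' : F.V} {l l' : List F.Step}
    (hl : F.IsWalk v w l) (hl' : F.IsWalk v w' l') (hw : p.vmap w = p.vmap w') :
    ((gloop p v a ha1 hl) * (gloop p v a ha1 hl')⁻¹).val =
      E.red (p.wmap l ++ E.winv (p.wmap l')) := by
  rw [hGE, loop_inv_val hGE, gloop_val, gloop_val, ← red_winv, red_append_red_left,
    red_append_red_right, winv_append, winv_winv, hw, List.append_assoc,
    red_append_congr_right (y' := E.winv (p.wmap l'))
      (red_winv_append_left _ _) _]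

lemma gloop_mem_range [GF : Group (F.Loop v)]
    (hGE : ∀ x y : E.Loop (p.vmap v), (x * y).val = E.red (x.val ++ y.val))
    (f : F.Loop v →* E.Loop (p.vmap v)) (hf : ∀ l : F.Loop v, (f l).val = p.wmap l.val)
    (ha1 : ∀ w, E.IsWalk (p.vmap v) w (a w)) {w : F.V} {l l' : List F.Step}
    (hl : F.IsWalk v w l) (hl' : F.IsWalk v w l') :
    (gloop p v a ha1 hl) * (gloop p v a ha1 hl')⁻¹ ∈ f.range := by
  have hz : F.IsWalk v v (F.red (l ++ F.winv l')) := (hl.append hl'.winv).red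
  set ℓ : F.Loop v := ⟨F.red (l ++ F.winv l'), hz, red_reduced _⟩ with hℓ
  refine ⟨ℓ, ?_⟩
  apply Subtype.ext
  rw [hf, gloop_mul_inv hGE ha1 hl hl' rfl]
  have h1 : E.red (p.wmap (F.red (l ++ F.winv l'))) =
      E.red (p.wmap l ++ E.winv (p.wmap l')) := by
    rw [red_wmap, wmap_append, wmap_winv]
  have h2 : E.Reduced (p.wmap (F.red (l ++ F.winv l'))) := by
    have := (f ℓ).2.2
    rwa [hf] at this
  rw [hℓ]
  exact (h1.symm.trans (red_of_reduced h2)).symm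

lemma gloop_range_endpoint (hp : Digraph'.IsCovering p) [GF : Group (F.Loop v)]
    (hGE : ∀ x y : E.Loop (p.vmap v), (x * y).val = E.red (x.val ++ y.val))
    (f : F.Loop v →* E.Loop (p.vmap v)) (hf : ∀ l : F.Loop v, (f l).val = p.wmap l.val)
    (ha1 : ∀ w, E.IsWalk (p.vmap v) w (a w)) {w w' : F.V} {l l' : List F.Step}
    (hl : F.IsWalk v w l) (hl' : F.IsWalk v w' l') (hw : p.vmap w = p.vmap w')
    (hmem : (gloop p v a ha1 hl) * (gloop p v a ha1 hl')⁻¹ ∈ f.range) : w = w' := by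
  obtain ⟨ℓ, hℓ⟩ := hmem
  have hval : p.wmap ℓ.val = E.red (p.wmap l ++ E.winv (p.wmap l')) := by
    rw [← hf, hℓ, gloop_mul_inv hGE ha1 hl hl' hw]
  have hm1 : F.IsWalk v w' (F.red (ℓ.val ++ l')) := (ℓ.2.1.append hl').red
  have hm2 : F.IsWalk v w (F.red l) := hl.red
  have key : E.red (p.wmap (F.red (ℓ.val ++ l'))) = E.red (p.wmap (F.red l)) := by
    rw [red_wmap, red_wmap, wmap_append, hval, red_append_red_left,
      List.append_assoc, red_append_winv_self]
  have hr1 : E.Reduced (p.wmap (F.red (ℓ.val ++ l'))) :=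
    reduced_wmap hp hm1 (red_reduced _)
  have hr2 : E.Reduced (p.wmap (F.red l)) := reduced_wmap hp hm2 (red_reduced _)
  rw [red_of_reduced hr1, red_of_reduced hr2] at key
  have := wmap_inj_walk hp hm1 hm2 key
  exact (hm1.end_unique (this ▸ hm2)).symm

end Gloop

end Digraph'

/-- a connected covering `p : F → E` is isomorphic to the relative skew
product `E ×_c (π₁(E, p(v)) / p₊π₁(F, v))`, where `c = c_{p(v),T}` is the labelling
`c(e) = a_{s(e)} e a_{r(e)}⁻¹` determined by a spanning tree `T` and base point `p(v)`. -/
theorem covering_iso_relative_skew_product {F E : Digraph'} (p : Digraph'.Hom F E)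
    (hp : Digraph'.IsCovering p) (hconnF : F.Connected) (v : F.V)
    [GF : Group (F.Loop v)]
    (hGF : ∀ a b : F.Loop v, (a * b).val = F.red (a.val ++ b.val))
    [GE : Group (E.Loop (p.vmap v))]
    (hGE : ∀ a b : E.Loop (p.vmap v), (a * b).val = E.red (a.val ++ b.val))
    (f : F.Loop v →* E.Loop (p.vmap v))
    (hf : ∀ l : F.Loop v, (f l).val = p.wmap l.val) (hfinj : Function.Injective f)
    (T : Set E.E) (hT : E.IsSpanningTree T)
    (a : E.V → List E.Step)
    (ha : ∀ w, E.IsWalk (p.vmap v) w (a w) ∧ E.Reduced (a w) ∧ E.InTree T (a w))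
    (c : E.E → E.Loop (p.vmap v))
    (hc : ∀ e, (c e).val = E.red (a (E.s e) ++ (e, true) :: E.winv (a (E.r e)))) :
    ∃ φ : Digraph'.Hom F (E.skew c f.range),
      Function.Bijective φ.vmap ∧ Function.Bijective φ.emap := by
  classical
  choose L hL using hconnF v
  have ha1 : ∀ w, E.IsWalk (p.vmap v) w (a w) := fun w => (ha w).1
  -- the coset associated to a vertex of F
  let q : F.V → (E.Loop (p.vmap v)) ⧸ f.range :=
    fun w => QuotientGroup.mk (gloop p v a ha1 (hL w))⁻¹
  -- the coset is independent of the chosen walk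
  have hq : ∀ (w : F.V) {l : List F.Step} (hl : F.IsWalk v w l),
      q w = QuotientGroup.mk (gloop p v a ha1 hl)⁻¹ := by
    intro w l hl
    show QuotientGroup.mk (gloop p v a ha1 (hL w))⁻¹ = _
    rw [QuotientGroup.eq, inv_inv]
    exact gloop_mem_range hGE f hf ha1 (hL w) hl
  -- compatibility of the coset with the labelling
  have hsq : ∀ e : F.E, c (p.emap e) • q (F.r e) = q (F.s e) := by
    intro e
    have hwalk2 : F.IsWalk v (F.r e) (L (F.s e) ++ [(e, true)]) :=
      (hL (F.s e)).append ⟨by simp [Digraph'.stepSrc],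
        by show F.stepTgt (e, true) = F.r e; simp [Digraph'.stepTgt]⟩
    have hkey : gloop p v a ha1 (hL (F.s e)) * c (p.emap e) =
        gloop p v a ha1 hwalk2 := by
      apply Subtype.ext
      rw [hGE, gloop_val, gloop_val, hc, red_append_red_left, red_append_red_right,
        p.hs, p.hr]
      calc E.red ((p.wmap (L (F.s e)) ++ E.winv (a (p.vmap (F.s e)))) ++
            (a (p.vmap (F.s e)) ++ (p.emap e, true) :: E.winv (a (p.vmap (F.r e)))))
          = E.red (p.wmap (L (F.s e)) ++ (E.winv (a (p.vmap (F.s e))) ++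
              (a (p.vmap (F.s e)) ++ ((p.emap e, true) ::
                E.winv (a (p.vmap (F.r e))))))) := by
            rw [List.append_assoc]
        _ = E.red (p.wmap (L (F.s e)) ++
              ((p.emap e, true) :: E.winv (a (p.vmap (F.r e))))) :=
            red_append_congr_right (red_winv_append_left _ _) _
        _ = E.red (p.wmap (L (F.s e) ++ [(e, true)]) ++
              E.winv (a (p.vmap (F.r e)))) := by
            rw [wmap_append, List.append_assoc]
            rfl
    have hmem : gloop p v a ha1 hwalk2 * (gloop p v a ha1 (hL (F.r e)))⁻¹ ∈ f.range :=
      gloop_mem_range hGE f hf ha1 hwalk2 (hL (F.r e))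
    rw [← hkey] at hmem
    show c (p.emap e) • QuotientGroup.mk (gloop p v a ha1 (hL (F.r e)))⁻¹ =
      QuotientGroup.mk (gloop p v a ha1 (hL (F.s e)))⁻¹
    have hmk : c (p.emap e) • QuotientGroup.mk (s := f.range)
        (gloop p v a ha1 (hL (F.r e)))⁻¹ =
        QuotientGroup.mk (c (p.emap e) * (gloop p v a ha1 (hL (F.r e)))⁻¹) := rfl
    rw [hmk, QuotientGroup.eq]
    have heq : (c (p.emap e) * (gloop p v a ha1 (hL (F.r e)))⁻¹)⁻¹ *
        (gloop p v a ha1 (hL (F.s e)))⁻¹ =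
        ((gloop p v a ha1 (hL (F.s e)) * c (p.emap e)) *
          (gloop p v a ha1 (hL (F.r e)))⁻¹)⁻¹ := by group
    rw [heq]
    exact Subgroup.inv_mem _ hmem
  -- injectivity of the vertex map
  have hvinj : Function.Injective (fun w : F.V => ((p.vmap w, q w) :
      (E.skew c f.range).V)) := by
    intro w w' hww
    have h1 : p.vmap w = p.vmap w' := congrArg Prod.fst hww
    have h2 : QuotientGroup.mk (s := f.range) (gloop p v a ha1 (hL w))⁻¹ =
        QuotientGroup.mk (gloop p v a ha1 (hL w'))⁻¹ := congrArg Prod.snd hww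
    rw [QuotientGroup.eq, inv_inv] at h2
    exact gloop_range_endpoint hp hGE f hf ha1 (hL w) (hL w') h1 h2
  -- surjectivity of the vertex map
  have hvsurj : Function.Surjective (fun w : F.V => ((p.vmap w, q w) :
      (E.skew c f.range).V)) := by
    rintro ⟨x, γq⟩
    obtain ⟨γ, rfl⟩ := QuotientGroup.mk_surjective γq
    have hwalk : E.IsWalk (p.vmap v) x (E.winv γ.val ++ a x) :=
      γ.2.1.winv.append (ha1 x)
    obtain ⟨m, w, hm, hwm, hwx⟩ := lift_walk hp _ v x hwalk
    have hgv : gloop p v a ha1 hm = γ⁻¹ := by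
      apply Subtype.ext
      rw [gloop_val, loop_inv_val hGE, hwm, hwx, List.append_assoc,
        red_append_congr_right (y' := ([] : List E.Step))
          (by rw [red_append_winv]; rfl) _,
        List.append_nil, red_winv, red_of_reduced γ.2.2]
    refine ⟨w, ?_⟩
    show (p.vmap w, q w) = (x, QuotientGroup.mk γ)
    refine Prod.ext hwx ?_
    show q w = _
    rw [hq w hm, hgv, inv_inv]
  refine ⟨{ vmap := fun w => (p.vmap w, q w)
            emap := fun e => (p.emap e, q (F.r e))
            hr := fun e => Prod.ext (p.hr e) rfl
            hs := fun e => Prod.ext (p.hs e) (hsq e) }, ⟨hvinj, hvsurj⟩, ?_, ?_⟩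
  · -- injectivity of the edge map
    intro e e' he
    have h1 : p.emap e = p.emap e' := congrArg Prod.fst he
    have h2 : q (F.r e) = q (F.r e') := congrArg Prod.snd he
    have hre : F.r e = F.r e' := by
      apply hvinj
      show (p.vmap (F.r e), q (F.r e)) = (p.vmap (F.r e'), q (F.r e'))
      refine Prod.ext ?_ h2
      rw [← p.hr, ← p.hr, h1]
    exact (hp.rbij (F.r e)).injOn rfl hre.symm h1
  · -- surjectivity of the edge map
    rintro ⟨y, γq⟩
    obtain ⟨w, hw⟩ := hvsurj (E.r y, γq)
    have h1 : p.vmap w = E.r y := congrArg Prod.fst hw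
    obtain ⟨e, he, hee⟩ := (hp.rbij w).surjOn h1.symm
    refine ⟨e, ?_⟩
    show (p.emap e, q (F.r e)) = (y, γq)
    refine Prod.ext hee ?_
    show q (F.r e) = γq
    have : F.r e = w := he
    rw [this]
    exact congrArg Prod.snd hw
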